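/- Let ψ be a branching mechanism of Lévy–Khintchine form with γ > 1. For r ∈ (0, r₀) and q ≥ 1, set μ_{r,q} = φ^{−1}(q·((1/r)·log log(1/r))²). Then: (a) for all r ∈ (0, r₀) and all q ≥ 1, r²·μ_{r,q}/ψ^{−1}(μ_{r,q}) ≥ (1/4)·(log log(1/r))²; and (b) if moreover δ > 1, then for every a > δ/(δ−1) there exist C ∈ [1,∞) and r' ∈ (0, r₀), depending only on ψ and a, such that μ_{r,1} ≤ μ_{r,q} ≤ C·q^a·μ_{r,1} for all r ∈ (0, r') and all q ≥ 1. -/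

import Mathlib

open MeasureTheory Filter Set

noncomputable section

/-- The branching mechanism `ψ(λ) = αλ + βλ² + ∫_{(0,∞)} (e^{−λr} − 1 + λr) π(dr)`. -/
def psiFun (α β : ℝ) (π : Measure ℝ) : ℝ → ℝ := fun l =>
  α * l + β * l ^ 2 + ∫ r, (Real.exp (-(l * r)) - 1 + l * r) ∂π

/-- `ψ′(λ) = α + 2βλ + ∫_{(0,∞)} r(1 − e^{−λr}) π(dr)`. -/
def psiDeriv (α β : ℝ) (π : Measure ℝ) : ℝ → ℝ := fun l =>
  α + 2 * β * l + ∫ r, r * (1 - Real.exp (-(l * r))) ∂π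

/-- `(α, β, π)` is the datum of a (sub)critical branching mechanism of
Lévy–Khintchine form: `α, β ≥ 0`, `π` is a Borel measure carried by `(0,∞)`
with `∫ min(r, r²) π(dr) < ∞`. -/
structure IsBranchingMechanism (α β : ℝ) (π : Measure ℝ) : Prop where
  alpha_nonneg : 0 ≤ α
  beta_nonneg : 0 ≤ β
  carried_on_pos : π (Set.Iic 0) = 0
  integ_min : Integrable (fun r => min r (r ^ 2)) π

/-- The lower index `γ_f = sup {c ≥ 0 : f(λ)λ^{−c} → ∞}` (with `sup ∅ = 0`). -/
def lowerIndex (f : ℝ → ℝ) : ℝ :=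
  sSup {c : ℝ | 0 ≤ c ∧ Tendsto (fun l : ℝ => f l * l ^ (-c)) atTop atTop}

/-- The upper index `η_f = inf {c ≥ 0 : f(λ)λ^{−c} → 0}`. -/
def upperIndex (f : ℝ → ℝ) : ℝ :=
  sInf {c : ℝ | 0 ≤ c ∧ Tendsto (fun l : ℝ => f l * l ^ (-c)) atTop (nhds 0)}

/-- `δ_f = sup {c ≥ 0 : ∃ C > 0, ∀ 1 ≤ μ ≤ λ, C f(μ)μ^{−c} ≤ f(λ)λ^{−c}}`. -/
def deltaIndex (f : ℝ → ℝ) : ℝ :=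
  sSup {c : ℝ | 0 ≤ c ∧ ∃ C : ℝ, 0 < C ∧
    ∀ μ l : ℝ, 1 ≤ μ → μ ≤ l → C * (f μ * μ ^ (-c)) ≤ f l * l ^ (-c)}

/-- `r₀ = min(α^{−1/2}, e^{−e})`, with the convention `α^{−1/2} = ∞` when `α = 0`. -/
def gaugeR0 (α : ℝ) : ℝ :=
  if α = 0 then Real.exp (-Real.exp 1)
  else min (α ^ (-(1 : ℝ) / 2)) (Real.exp (-Real.exp 1))

/-- The gauge function `g(r) = log log(1/r) / φ^{−1}(((1/r)·log log(1/r))²)`,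
expressed through the inverse `φ^{−1}` of `φ = ψ′ ∘ ψ^{−1}`. -/
def gaugeFun (φinv : ℝ → ℝ) : ℝ → ℝ := fun r =>
  Real.log (Real.log (1 / r)) / φinv ((1 / r * Real.log (Real.log (1 / r))) ^ 2)


lemma aux_exp1 (x : ℝ) (hx : 0 ≤ x) : 1 - (1+x) * Real.exp (-x) ≥ 0 := by
  have h := Real.add_one_le_exp x
  have he : Real.exp (-x) = (Real.exp x)⁻¹ := Real.exp_neg x
  have hp : 0 < Real.exp x := Real.exp_pos x
  rw [he, ge_iff_le, ← sub_nonneg]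
  have : 1 - (1+x) * (Real.exp x)⁻¹ - 0 = (Real.exp x - (1+x)) / Real.exp x := by
    field_simp
    ring
  rw [this]
  apply div_nonneg (by linarith) hp.le

lemma aux_exple1 (x : ℝ) (hx : 0 ≤ x) : Real.exp (-x) ≤ 1 := by
  rw [Real.exp_le_one_iff]; linarith

lemma aux_exp2 (x : ℝ) : Real.exp (-x) - 1 + x ≥ 0 := by
  have := Real.add_one_le_exp (-x); linarith

lemma aux_exp3 (x : ℝ) (hx : 0 ≤ x) : Real.exp (-x) - 1 + x ≤ x := by
  have := aux_exple1 x hx; linarith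

-- e^{-x} - 1 + x ≤ x^2  for x ≥ 0, via derivative
lemma aux_exp4 (x : ℝ) (hx : 0 ≤ x) : Real.exp (-x) - 1 + x ≤ x^2 := by
  have key : ∀ y ∈ Set.Ici (0:ℝ), HasDerivAt (fun t : ℝ => t^2 + 1 - t - Real.exp (-t))
      (2*y - 1 + Real.exp (-y)) y := by
    intro y _
    have h1 : HasDerivAt (fun t : ℝ => Real.exp (-t)) (-Real.exp (-y)) y := by
      convert (hasDerivAt_neg y).exp using 1; simp
    have h2 : HasDerivAt (fun t : ℝ => t^2 + 1 - t) (2*y - 1) y := by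
      have := ((hasDerivAt_pow 2 y).add_const 1).sub (hasDerivAt_id y)
      have e : (2:ℝ)*y - 1 = ((2:ℕ):ℝ) * y^(2-1) - 1 := by norm_num
      rw [e]; exact this
    have e : 2*y - 1 + Real.exp (-y) = (2*y - 1) - -Real.exp (-y) := by ring
    rw [e]; exact h2.sub h1
  have mono : MonotoneOn (fun t : ℝ => t^2 + 1 - t - Real.exp (-t)) (Set.Ici 0) := by
    apply monotoneOn_of_deriv_nonneg (convex_Ici 0)
    · exact Continuous.continuousOn (by continuity)
    · intro y hy
      rw [interior_Ici] at hy
      exact (key y (Set.mem_Ici.mpr (le_of_lt hy))).differentiableAt.differentiableWithinAt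
    · intro y hy
      rw [interior_Ici] at hy
      rw [(key y (Set.mem_Ici.mpr hy.le)).deriv]
      have := Real.add_one_le_exp (-y)
      nlinarith [(Set.mem_Ioi.mp hy).le]
  have h0 := mono (Set.self_mem_Ici) hx hx
  simp at h0
  nlinarith [h0]

-- (2+x) e^{-x} + x - 2 ≥ 0 for x ≥ 0, i.e. x(1-e^{-x}) ≤ 2(e^{-x}-1+x)
lemma aux_exp5 (x : ℝ) (hx : 0 ≤ x) : 0 ≤ (2+x) * Real.exp (-x) + x - 2 := by
  have key : ∀ y ∈ Set.Ici (0:ℝ), HasDerivAt (fun t : ℝ => (2+t) * Real.exp (-t) + t - 2)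
      (1 - (1+y) * Real.exp (-y)) y := by
    intro y _
    have h1 : HasDerivAt (fun t : ℝ => Real.exp (-t)) (-Real.exp (-y)) y := by
      convert (hasDerivAt_neg y).exp using 1; simp
    have h2 : HasDerivAt (fun t : ℝ => (2+t)) 1 y := by
      simpa using (hasDerivAt_id y).const_add 2
    have h3 := (h2.mul h1).add_const (0:ℝ)
    have h4 : HasDerivAt (fun t : ℝ => (2+t) * Real.exp (-t) + t - 2)
        (1 * Real.exp (-y) + (2+y) * (-Real.exp (-y)) + 1) y := by
      exact ((h2.mul h1).add (hasDerivAt_id' y)).sub_const 2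
    convert h4 using 1; ring
  have mono : MonotoneOn (fun t : ℝ => (2+t) * Real.exp (-t) + t - 2) (Set.Ici 0) := by
    apply monotoneOn_of_deriv_nonneg (convex_Ici 0)
    · exact Continuous.continuousOn (by continuity)
    · intro y hy
      rw [interior_Ici] at hy
      exact (key y (Set.mem_Ici.mpr hy.le)).differentiableAt.differentiableWithinAt
    · intro y hy
      rw [interior_Ici] at hy
      rw [(key y (Set.mem_Ici.mpr hy.le)).deriv]
      have := aux_exp1 y hy.le
      linarith
  have h0 := mono (Set.self_mem_Ici) hx hx
  simp at h0
  linarith [h0]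

section Helpers
variable {α β : ℝ} {π : Measure ℝ}

lemma ae_pos (h : IsBranchingMechanism α β π) : ∀ᵐ r ∂π, 0 < r := by
  rw [ae_iff]
  convert h.carried_on_pos using 2
  ext r; simp [not_lt]

lemma integ_f (h : IsBranchingMechanism α β π) (l : ℝ) (hl : 0 ≤ l) :
    Integrable (fun r => Real.exp (-(l * r)) - 1 + l * r) π := by
  apply Integrable.mono' (h.integ_min.const_mul (l + l^2))
  · exact (Continuous.aestronglyMeasurable (by continuity))
  · filter_upwards [ae_pos h] with r hr
    have hx : 0 ≤ l * r := mul_nonneg hl hr.le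
    have h2 := aux_exp2 (l*r)
    rw [Real.norm_eq_abs, abs_of_nonneg (by linarith)]
    rcases le_total r 1 with hr1 | hr1
    · have : min r (r^2) = r^2 := min_eq_right (by nlinarith)
      rw [this]
      have := aux_exp4 (l*r) hx
      nlinarith
    · have : min r (r^2) = r := min_eq_left (by nlinarith)
      rw [this]
      have := aux_exp3 (l*r) hx
      nlinarith

lemma integ_g (h : IsBranchingMechanism α β π) (l : ℝ) (hl : 0 ≤ l) :
    Integrable (fun r => r * (1 - Real.exp (-(l * r)))) π := by
  apply Integrable.mono' (h.integ_min.const_mul (1 + l))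
  · exact (Continuous.aestronglyMeasurable (by continuity))
  · filter_upwards [ae_pos h] with r hr
    have hx : 0 ≤ l * r := mul_nonneg hl hr.le
    have he1 : Real.exp (-(l*r)) ≤ 1 := aux_exple1 _ hx
    have he2 : 1 - Real.exp (-(l*r)) ≤ l * r := by
      have := Real.add_one_le_exp (-(l*r)); linarith
    rw [Real.norm_eq_abs, abs_of_nonneg (by nlinarith)]
    rcases le_total r 1 with hr1 | hr1
    · have : min r (r^2) = r^2 := min_eq_right (by nlinarith)
      rw [this]; nlinarith
    · have hmin : min r (r^2) = r := min_eq_left (by nlinarith)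
      rw [hmin]
      have h9 : r * (1 - Real.exp (-(l*r))) ≤ r * 1 :=
        mul_le_mul_of_nonneg_left (by linarith [Real.exp_pos (-(l*r))]) hr.le
      nlinarith [mul_nonneg hl hr.le]

/-- `λ ψ'(λ) ≤ 2 ψ(λ)` for `λ ≥ 0`. -/
lemma lpsi_le (h : IsBranchingMechanism α β π) (l : ℝ) (hl : 0 ≤ l) :
    l * psiDeriv α β π l ≤ 2 * psiFun α β π l := by
  unfold psiFun psiDeriv
  have hint : ∫ r, l * (r * (1 - Real.exp (-(l * r)))) ∂π ≤
      ∫ r, 2 * (Real.exp (-(l * r)) - 1 + l * r) ∂π := by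
    apply integral_mono_ae ((integ_g h l hl).const_mul l) ((integ_f h l hl).const_mul 2)
    filter_upwards [ae_pos h] with r hr
    have hx : 0 ≤ l * r := mul_nonneg hl hr.le
    have := aux_exp5 (l*r) hx
    have he : (2 + l*r) * Real.exp (-(l*r)) + l*r - 2 ≥ 0 := this
    nlinarith [Real.exp_pos (-(l*r))]
  rw [integral_const_mul, integral_const_mul] at hint
  have hα : 0 ≤ α * l := mul_nonneg h.alpha_nonneg hl
  nlinarith [h.beta_nonneg, sq_nonneg l]

/-- `ψ(λ) ≤ λ ψ'(λ)` for `λ ≥ 0`. -/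
lemma psi_le_l (h : IsBranchingMechanism α β π) (l : ℝ) (hl : 0 ≤ l) :
    psiFun α β π l ≤ l * psiDeriv α β π l := by
  unfold psiFun psiDeriv
  have hint : ∫ r, (Real.exp (-(l * r)) - 1 + l * r) ∂π ≤
      ∫ r, l * (r * (1 - Real.exp (-(l * r)))) ∂π := by
    apply integral_mono_ae (integ_f h l hl) ((integ_g h l hl).const_mul l)
    filter_upwards [ae_pos h] with r hr
    have hx : 0 ≤ l * r := mul_nonneg hl hr.le
    have := aux_exp1 (l*r) hx
    nlinarith
  rw [integral_const_mul] at hint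
  nlinarith [h.beta_nonneg, sq_nonneg l, mul_nonneg h.alpha_nonneg hl]

/-- ψ' is monotone on [0,∞). -/
lemma psiDeriv_mono (h : IsBranchingMechanism α β π) {l₁ l₂ : ℝ} (h1 : 0 ≤ l₁) (h12 : l₁ ≤ l₂) :
    psiDeriv α β π l₁ ≤ psiDeriv α β π l₂ := by
  unfold psiDeriv
  have hint : ∫ r, r * (1 - Real.exp (-(l₁ * r))) ∂π ≤ ∫ r, r * (1 - Real.exp (-(l₂ * r))) ∂π := by
    apply integral_mono_ae (integ_g h l₁ h1) (integ_g h l₂ (h1.trans h12))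
    filter_upwards [ae_pos h] with r hr
    have : Real.exp (-(l₂ * r)) ≤ Real.exp (-(l₁ * r)) := by
      apply Real.exp_le_exp.mpr; nlinarith
    nlinarith
  nlinarith [h.beta_nonneg]

/-- ψ is monotone on [0,∞). -/
lemma psiFun_mono (h : IsBranchingMechanism α β π) {l₁ l₂ : ℝ} (h1 : 0 ≤ l₁) (h12 : l₁ ≤ l₂) :
    psiFun α β π l₁ ≤ psiFun α β π l₂ := by
  unfold psiFun
  have hint : ∫ r, (Real.exp (-(l₁ * r)) - 1 + l₁ * r) ∂π ≤
      ∫ r, (Real.exp (-(l₂ * r)) - 1 + l₂ * r) ∂π := by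
    apply integral_mono_ae (integ_f h l₁ h1) (integ_f h l₂ (h1.trans h12))
    filter_upwards [ae_pos h] with r hr
    -- e^{-a} - e^{-b} ≤ b - a for a ≤ b : e^{-a}(1-e^{-(b-a)}) ≤ b-a
    have key : Real.exp (-(l₁*r)) - Real.exp (-(l₂*r)) ≤ l₂*r - l₁*r := by
      have h1' : Real.exp (-(l₁*r)) ≤ 1 := aux_exple1 _ (mul_nonneg h1 hr.le)
      have h2' : 1 - Real.exp (-((l₂-l₁)*r)) ≤ (l₂-l₁)*r := by
        have := Real.add_one_le_exp (-((l₂-l₁)*r)); linarith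
      have h3' : Real.exp (-(l₂*r)) = Real.exp (-(l₁*r)) * Real.exp (-((l₂-l₁)*r)) := by
        rw [← Real.exp_add]; ring_nf
      rw [h3']
      have hepos : 0 < Real.exp (-(l₁*r)) := Real.exp_pos _
      have h5' : Real.exp (-((l₂-l₁)*r)) ≤ 1 := aux_exple1 _ (by nlinarith)
      have : Real.exp (-(l₁*r)) - Real.exp (-(l₁*r)) * Real.exp (-((l₂-l₁)*r))
          = Real.exp (-(l₁*r)) * (1 - Real.exp (-((l₂-l₁)*r))) := by ring
      rw [this]
      calc Real.exp (-(l₁*r)) * (1 - Real.exp (-((l₂-l₁)*r)))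
          ≤ 1 * (1 - Real.exp (-((l₂-l₁)*r))) := by nlinarith
        _ ≤ l₂*r - l₁*r := by nlinarith
    linarith
  have hα : α * l₁ ≤ α * l₂ := mul_le_mul_of_nonneg_left h12 h.alpha_nonneg
  have hβ : β * l₁^2 ≤ β * l₂^2 := by
    have : l₁^2 ≤ l₂^2 := by nlinarith
    exact mul_le_mul_of_nonneg_left this h.beta_nonneg
  linarith

lemma psiDeriv_zero : psiDeriv α β π 0 = α := by
  unfold psiDeriv
  simp

lemma psiFun_zero : psiFun α β π 0 = 0 := by
  unfold psiFun
  simp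

end Helpers

set_option maxHeartbeats 2000000 in
/-- with μ_{r,q} = φ^{−1}(q·((1/r) log log(1/r))²): (a) for all
r ∈ (0, r₀) and q ≥ 1, r²μ_{r,q}/ψ^{−1}(μ_{r,q}) ≥ (1/4)(log log(1/r))²;
(b) if δ > 1 then for every a > δ/(δ−1) there are C ≥ 1 and r′ ∈ (0, r₀) with
μ_{r,1} ≤ μ_{r,q} ≤ C q^a μ_{r,1} for all r ∈ (0, r′) and q ≥ 1. -/
theorem statement19 (α β : ℝ) (π : Measure ℝ) (h : IsBranchingMechanism α β π)
    (hγ : 1 < lowerIndex (psiFun α β π))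
    (ψinv φinv : ℝ → ℝ)
    (hψinv : ∀ x : ℝ, 0 ≤ x → 0 ≤ ψinv x ∧ psiFun α β π (ψinv x) = x)
    (hψinv' : ∀ y : ℝ, 0 ≤ y → ψinv (psiFun α β π y) = y)
    (hφinv : ∀ x : ℝ, α ≤ x → 0 ≤ φinv x ∧ psiDeriv α β π (ψinv (φinv x)) = x)
    (hφinv' : ∀ y : ℝ, 0 ≤ y → φinv (psiDeriv α β π (ψinv y)) = y) :
    (∀ r : ℝ, 0 < r → r < gaugeR0 α → ∀ q : ℝ, 1 ≤ q →
      (1 / 4) * Real.log (Real.log (1 / r)) ^ 2 ≤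
        r ^ 2 * φinv (q * (1 / r * Real.log (Real.log (1 / r))) ^ 2)
          / ψinv (φinv (q * (1 / r * Real.log (Real.log (1 / r))) ^ 2))) ∧
    (1 < deltaIndex (psiFun α β π) →
      ∀ a : ℝ, deltaIndex (psiFun α β π) / (deltaIndex (psiFun α β π) - 1) < a →
        ∃ C : ℝ, 1 ≤ C ∧ ∃ r' : ℝ, 0 < r' ∧ r' < gaugeR0 α ∧
          ∀ r : ℝ, 0 < r → r < r' → ∀ q : ℝ, 1 ≤ q →
            φinv ((1 / r * Real.log (Real.log (1 / r))) ^ 2) ≤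
              φinv (q * (1 / r * Real.log (Real.log (1 / r))) ^ 2) ∧
            φinv (q * (1 / r * Real.log (Real.log (1 / r))) ^ 2) ≤
              C * q ^ a * φinv ((1 / r * Real.log (Real.log (1 / r))) ^ 2)) := by
  have setup : ∀ x : ℝ, α < x → 0 < ψinv (φinv x) ∧ psiDeriv α β π (ψinv (φinv x)) = x ∧
      psiFun α β π (ψinv (φinv x)) = φinv x ∧ 0 ≤ φinv x := by
    intro x hx
    obtain ⟨h1, h2⟩ := hφinv x hx.le
    obtain ⟨h3, h4⟩ := hψinv _ h1
    refine ⟨?_, h2, h4, h1⟩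
    rcases h3.lt_or_eq with hlt | heq
    · exact hlt
    · exfalso
      rw [← heq, psiDeriv_zero] at h2
      linarith
  have hXgen : ∀ r : ℝ, 0 < r → r < gaugeR0 α → ∀ p : ℝ, 1 ≤ p →
      1 < Real.log (Real.log (1/r)) ∧
      α < p * (1/r * Real.log (Real.log (1/r)))^2 := by
    intro r hr0 hrR p hp
    have hre : r < Real.exp (-Real.exp 1) := by
      rcases eq_or_ne α 0 with h0 | h0
      · simpa [gaugeR0, h0] using hrR
      · rw [gaugeR0, if_neg h0] at hrR
        exact hrR.trans_le (min_le_right _ _)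
    have h1r : Real.exp (Real.exp 1) < 1/r := by
      have := one_div_lt_one_div_of_lt hr0 hre
      rwa [one_div, ← Real.exp_neg, neg_neg] at this
    have hlog : Real.exp 1 < Real.log (1/r) := by
      have := Real.log_lt_log (Real.exp_pos _) h1r
      rwa [Real.log_exp] at this
    have hL1 : 1 < Real.log (Real.log (1/r)) := by
      have := Real.log_lt_log (Real.exp_pos 1) hlog
      rwa [Real.log_exp] at this
    refine ⟨hL1, ?_⟩
    set L := Real.log (Real.log (1/r))
    have hr0' : 0 < 1/r := by positivity
    have hbase : 1/r * 1 ≤ 1/r * L := mul_le_mul_of_nonneg_left hL1.le hr0'.le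
    have hpos : 0 < 1/r * L := by nlinarith
    have hsq : (1/r)^2 ≤ p * (1/r * L)^2 := by nlinarith [sq_nonneg (1/r), sq_nonneg (1/r*L)]
    rcases eq_or_ne α 0 with h0 | h0
    · rw [h0]; nlinarith
    · have hα : 0 < α := lt_of_le_of_ne h.alpha_nonneg (Ne.symm h0)
      have hhalf : (0:ℝ) < α ^ ((1:ℝ)/2) := Real.rpow_pos_of_pos hα _
      have hrlt : r < (α ^ ((1:ℝ)/2))⁻¹ := by
        rw [gaugeR0, if_neg h0] at hrR
        have h5 : α ^ (-(1:ℝ)/2) = (α ^ ((1:ℝ)/2))⁻¹ := by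
          rw [← Real.rpow_neg hα.le]; norm_num
        have := hrR.trans_le (min_le_left _ _)
        rwa [h5] at this
      have h6 : α ^ ((1:ℝ)/2) < 1/r := by
        have := one_div_lt_one_div_of_lt hr0 hrlt
        rwa [one_div, inv_inv] at this
      have h7 : (α ^ ((1:ℝ)/2))^2 = α := by
        rw [← Real.rpow_natCast (α ^ ((1:ℝ)/2)) 2, ← Real.rpow_mul hα.le]
        norm_num
      have h8 : (α ^ ((1:ℝ)/2))^2 < (1/r)^2 := by
        apply pow_lt_pow_left₀ h6 hhalf.le
        norm_num
      rw [← h7]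
      linarith
  constructor
  · -- part (a)
    intro r hr0 hrR q hq
    obtain ⟨hL1, hX⟩ := hXgen r hr0 hrR q hq
    obtain ⟨hlam, hD, hP, hμ0⟩ := setup _ hX
    set L := Real.log (Real.log (1/r)) with hLdef
    set X := q * (1/r * L)^2 with hXdef
    set μ := φinv X with hμdef
    set lam := ψinv μ with hlamdef
    rw [le_div_iff₀ hlam]
    have hkey : lam * X ≤ 2 * μ := by
      have := lpsi_le h lam hlam.le
      rwa [hD, hP] at this
    have e1 : r^2 * (lam * X) ≤ r^2 * (2*μ) := mul_le_mul_of_nonneg_left hkey (sq_nonneg r)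
    have e2 : r^2 * (lam * X) = lam * q * L^2 := by
      rw [hXdef]; field_simp
    have e4 : 0 ≤ lam * L^2 := mul_nonneg hlam.le (sq_nonneg L)
    have e3 : lam * L^2 ≤ lam * q * L^2 := by nlinarith
    linarith
  · -- part (b)
    intro hδ a ha
    have hδ1 : (0:ℝ) < deltaIndex (psiFun α β π) - 1 := by linarith
    have ha1 : 1 < a := by
      have : 1 < deltaIndex (psiFun α β π) / (deltaIndex (psiFun α β π) - 1) := by
        rw [lt_div_iff₀ hδ1]; linarith
      linarith
    have ht : a/(a-1) < deltaIndex (psiFun α β π) := by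
      rw [div_lt_iff₀ (by linarith : (0:ℝ) < a - 1)]
      rw [div_lt_iff₀ hδ1] at ha
      nlinarith
    have hne : {c : ℝ | 0 ≤ c ∧ ∃ C : ℝ, 0 < C ∧
        ∀ μ l : ℝ, 1 ≤ μ → μ ≤ l →
          C * (psiFun α β π μ * μ ^ (-c)) ≤ psiFun α β π l * l ^ (-c)}.Nonempty := by
      by_contra hcon
      rw [Set.not_nonempty_iff_eq_empty] at hcon
      unfold deltaIndex at hδ
      rw [hcon, Real.sSup_empty] at hδ
      linarith
    obtain ⟨c, hcS, hct⟩ := exists_lt_of_lt_csSup hne ht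
    obtain ⟨hc0, C₀, hC₀, hCkey⟩ := hcS
    have hc1 : 1 < c := by
      have : 1 < a/(a-1) := by rw [lt_div_iff₀ (by linarith : (0:ℝ) < a-1)]; linarith
      linarith
    have hca : c ≤ a * (c - 1) := by
      rw [div_lt_iff₀ (by linarith : (0:ℝ) < a-1)] at hct
      nlinarith
    set e := 1/(c-1) with hedef
    have he : 0 < e := by rw [hedef]; exact div_pos one_pos (by linarith)
    have hea : e + 1 ≤ a := by
      have : e ≤ a - 1 := by
        rw [hedef, div_le_iff₀ (by linarith : (0:ℝ) < c-1)]
        nlinarith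
      linarith
    set M := max (psiDeriv α β π 1) 1 with hMdef
    have hM1 : (1:ℝ) ≤ M := le_max_right _ _
    have hM0 : (0:ℝ) < M := by linarith
    have hR0 : 0 < gaugeR0 α := by
      rw [gaugeR0]
      split_ifs with h0
      · exact Real.exp_pos _
      · exact lt_min (Real.rpow_pos_of_pos (lt_of_le_of_ne h.alpha_nonneg (Ne.symm h0)) _)
          (Real.exp_pos _)
    refine ⟨max (2 * (2/C₀)^e) 1, le_max_right _ _, min (gaugeR0 α / 2) (1/(2*M)),
      lt_min (by linarith) (by positivity), (min_le_left _ _).trans_lt (by linarith), ?_⟩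
    intro r hr0 hrr' q hq
    have hq0 : (0:ℝ) < q := by linarith
    have hrR : r < gaugeR0 α := by
      have := hrr'.trans_le (min_le_left _ _)
      linarith
    obtain ⟨hL1, hX1'⟩ := hXgen r hr0 hrR 1 le_rfl
    obtain ⟨-, hXq⟩ := hXgen r hr0 hrR q hq
    have hX1raw : α < (1 / r * Real.log (Real.log (1 / r))) ^ 2 := by
      rwa [one_mul] at hX1'
    obtain ⟨hA0, hA', hAψ, hμ₁0⟩ := setup _ hX1raw
    obtain ⟨hB0, hB', hBψ, hμq0⟩ := setup _ hXq
    set L := Real.log (Real.log (1/r)) with hLdef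
    set X := (1/r * L)^2 with hXdef
    have hX1 : α < X := by rwa [one_mul] at hX1'
    have hX0 : 0 < X := h.alpha_nonneg.trans_lt hX1
    set μ₁ := φinv X with hμ₁def
    set μq := φinv (q*X) with hμqdef
    set A := ψinv μ₁ with hAdef
    set B := ψinv μq with hBdef
    have hr2M : 2*M < 1/r := by
      have hrlt : r < 1/(2*M) := hrr'.trans_le (min_le_right _ _)
      rw [lt_div_iff₀ hr0]
      rw [lt_div_iff₀ (by linarith : (0:ℝ) < 2*M)] at hrlt
      linarith
    have hψ'1 : psiDeriv α β π 1 < X := by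
      have h2 : (2*M)^2 < (1/r)^2 := by
        apply pow_lt_pow_left₀ hr2M (by linarith) (by norm_num)
      have h3 : (1/r)^2 ≤ X := by
        rw [hXdef, mul_pow]
        have hL2 : 1 ≤ L^2 := by nlinarith
        exact le_mul_of_one_le_right (sq_nonneg _) hL2
      have h4 : psiDeriv α β π 1 ≤ M := le_max_left _ _
      nlinarith [sq_nonneg M, hM1]
    have hA1 : 1 ≤ A := by
      by_contra hcon
      push_neg at hcon
      have := psiDeriv_mono h hA0.le hcon.le
      rw [hA'] at this
      linarith
    have hBA : A ≤ B := by
      by_contra hcon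
      push_neg at hcon
      have h2 := psiDeriv_mono h hB0.le hcon.le
      rw [hA', hB'] at h2
      have hq1 : q * X = X := by nlinarith
      have hμeq : μq = μ₁ := by rw [hμqdef, hμ₁def, hq1]
      have hBA' : B = A := by rw [hBdef, hAdef, hμeq]
      rw [hBA'] at hcon
      exact lt_irrefl _ hcon
    have hB1 : (0:ℝ) < B := hA0.trans_le hBA
    constructor
    · rw [← hAψ, ← hBψ]
      exact psiFun_mono h hA0.le hBA
    -- second inequality
    have hkey := hCkey A B hA1 hBA
    rw [hAψ, hBψ] at hkey
    have hBc : (0:ℝ) < B ^ c := Real.rpow_pos_of_pos hB1 c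
    have h1 : C₀ * (μ₁ * A^(-c)) * B^c ≤ μq := by
      have h1' := mul_le_mul_of_nonneg_right hkey hBc.le
      have h2' : μq * B^(-c) * B^c = μq := by
        rw [mul_assoc, ← Real.rpow_add hB1]
        simp
      rwa [h2'] at h1'
    have hμqB : μq ≤ B * (q*X) := by
      have := psi_le_l h B hB0.le
      rwa [hB', hBψ] at this
    have hμ₁A : A * X ≤ 2 * μ₁ := by
      have := lpsi_le h A hA0.le
      rwa [hA', hAψ] at this
    have hAc0 : (0:ℝ) < A^(-c) := Real.rpow_pos_of_pos hA0 _
    have hstep : C₀ * (A * X / 2 * A^(-c)) * B^c ≤ B * (q * X) := by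
      calc C₀ * (A * X / 2 * A^(-c)) * B^c ≤ C₀ * (μ₁ * A^(-c)) * B^c := by
            apply mul_le_mul_of_nonneg_right _ hBc.le
            apply mul_le_mul_of_nonneg_left _ hC₀.le
            apply mul_le_mul_of_nonneg_right _ hAc0.le
            linarith
        _ ≤ μq := h1
        _ ≤ B * (q*X) := hμqB
    have hAA : A^((1:ℝ)-c) = A * A^(-c) := by
      rw [sub_eq_add_neg, Real.rpow_add hA0, Real.rpow_one]
    have hBB : B^c = B * B^(c-1) := by
      nth_rewrite 1 [show c = 1 + (c-1) by ring]
      rw [Real.rpow_add hB1, Real.rpow_one]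
    have hcancel : C₀/2 * A^((1:ℝ)-c) * B^(c-1) ≤ q := by
      have hXB : (0:ℝ) < X * B := mul_pos hX0 hB1
      apply le_of_mul_le_mul_right _ hXB
      calc C₀/2 * A^((1:ℝ)-c) * B^(c-1) * (X*B) = C₀ * (A * X / 2 * A^(-c)) * B^c := by
            rw [hAA, hBB]; ring
        _ ≤ B * (q*X) := hstep
        _ = q * (X*B) := by ring
    have hAc1 : (0:ℝ) < A^(c-1) := Real.rpow_pos_of_pos hA0 _
    have hBc1 : (0:ℝ) ≤ B^(c-1) := (Real.rpow_pos_of_pos hB1 _).le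
    have hstep2 : B^(c-1) ≤ (2*q/C₀) * A^(c-1) := by
      have hAinv : A^((1:ℝ)-c) = (A^(c-1))⁻¹ := by
        rw [show (1:ℝ)-c = -(c-1) by ring, Real.rpow_neg hA0.le]
      rw [hAinv] at hcancel
      have hpos : (0:ℝ) < 2/C₀ * A^(c-1) := by positivity
      have hmul := mul_le_mul_of_nonneg_left hcancel hpos.le
      have hlhs : 2/C₀ * A^(c-1) * (C₀/2 * (A^(c-1))⁻¹ * B^(c-1)) = B^(c-1) := by
        field_simp
      rw [hlhs] at hmul
      calc B^(c-1) ≤ 2/C₀ * A^(c-1) * q := hmul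
        _ = (2*q/C₀) * A^(c-1) := by ring
    have hce : (c-1) * e = 1 := by
      rw [hedef, mul_one_div]
      exact div_self (sub_ne_zero.mpr (ne_of_gt hc1))
    have hBe : (B^(c-1))^e = B := by
      rw [← Real.rpow_mul hB1.le, hce, Real.rpow_one]
    have hrhs : ((2*q/C₀) * A^(c-1))^e = (2/C₀)^e * q^e * A := by
      rw [Real.mul_rpow (by positivity) hAc1.le, ← Real.rpow_mul hA0.le, hce, Real.rpow_one,
        show (2*q/C₀ : ℝ) = 2/C₀ * q by ring, Real.mul_rpow (by positivity) hq0.le]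
    have hBle : B ≤ (2/C₀)^e * q^e * A := by
      have := Real.rpow_le_rpow hBc1 hstep2 he.le
      rwa [hBe, hrhs] at this
    calc μq ≤ B * (q*X) := hμqB
      _ ≤ ((2/C₀)^e * q^e * A) * (q*X) := by
          apply mul_le_mul_of_nonneg_right hBle (by positivity)
      _ = ((2/C₀)^e * (q^e * q)) * (A*X) := by ring
      _ = ((2/C₀)^e * q^(e+1)) * (A*X) := by rw [Real.rpow_add_one (ne_of_gt hq0)]
      _ ≤ ((2/C₀)^e * q^(e+1)) * (2*μ₁) := by
          apply mul_le_mul_of_nonneg_left hμ₁A (by positivity)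
      _ = (2*(2/C₀)^e) * q^(e+1) * μ₁ := by ring
      _ ≤ (2*(2/C₀)^e) * q^a * μ₁ := by
          apply mul_le_mul_of_nonneg_right _ hμ₁0
          exact mul_le_mul_of_nonneg_left (Real.rpow_le_rpow_of_exponent_le hq hea)
            (by positivity)
      _ ≤ max (2*(2/C₀)^e) 1 * q^a * μ₁ := by
          apply mul_le_mul_of_nonneg_right _ hμ₁0
          exact mul_le_mul_of_nonneg_right (le_max_left _ _) (by positivity)
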